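/- arXiv:2011.00115 — 6 statements merged into one kernel-verified Lean document; each statement's English description precedes it below -/
import Mathlib

section
/- Let b, ε, ω, s₀ be real numbers with ε > 0 and s₀ > 0, and suppose s₀⁴ + (b²ε² − 2ω²)s₀² + ω⁴ − ε² = 0. Then ((s₀² − ω²)/ε)² + (b s₀)² = 1, and consequently there exists t_d ≥ 0 such that cos(s₀ t_d) = (s₀² − ω²)/ε and sin(s₀ t_d) = b s₀. -/
/-- Let `b, ε, ω, s₀` be real with `ε > 0`, `s₀ > 0` and suppose
`s₀⁴ + (b²ε² − 2ω²)s₀² + ω⁴ − ε² = 0`.  Then `((s₀² − ω²)/ε)² + (b s₀)² = 1`, and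
consequently there exists a delay `t_d ≥ 0` with `cos(s₀ t_d) = (s₀² − ω²)/ε` and
`sin(s₀ t_d) = b s₀`. -/
theorem stmt_5 (b ε ω s₀ : ℝ) (hε : 0 < ε) (hs₀ : 0 < s₀)
    (hq : s₀ ^ 4 + (b ^ 2 * ε ^ 2 - 2 * ω ^ 2) * s₀ ^ 2 + ω ^ 4 - ε ^ 2 = 0) :
    ((s₀ ^ 2 - ω ^ 2) / ε) ^ 2 + (b * s₀) ^ 2 = 1 ∧
    ∃ td : ℝ, 0 ≤ td ∧ Real.cos (s₀ * td) = (s₀ ^ 2 - ω ^ 2) / ε ∧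
      Real.sin (s₀ * td) = b * s₀ := by
  have hε' : ε ≠ 0 := ne_of_gt hε
  set x := (s₀ ^ 2 - ω ^ 2) / ε with hx
  set y := b * s₀ with hy
  have hcirc : x ^ 2 + y ^ 2 = 1 := by
    rw [hx, hy]
    field_simp
    nlinarith [hq]
  refine ⟨hcirc, ?_⟩
  have hx1 : -1 ≤ x := by nlinarith [sq_nonneg y]
  have hx2 : x ≤ 1 := by nlinarith [sq_nonneg y]
  have hsin : Real.sin (Real.arccos x) = Real.sqrt (1 - x ^ 2) := by
    rw [Real.sin_arccos]
  have hsqrt : Real.sqrt (1 - x ^ 2) = |y| := by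
    rw [show (1 : ℝ) - x ^ 2 = y ^ 2 by linarith, Real.sqrt_sq_eq_abs]
  by_cases hy0 : 0 ≤ y
  · refine ⟨Real.arccos x / s₀, div_nonneg (Real.arccos_nonneg x) hs₀.le, ?_, ?_⟩
    · rw [mul_div_cancel₀ _ (ne_of_gt hs₀), Real.cos_arccos hx1 hx2]
    · rw [mul_div_cancel₀ _ (ne_of_gt hs₀), hsin, hsqrt, abs_of_nonneg hy0]
  · refine ⟨(2 * Real.pi - Real.arccos x) / s₀, ?_, ?_, ?_⟩
    · apply div_nonneg _ hs₀.le
      have := Real.arccos_le_pi x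
      linarith [Real.pi_pos]
    · rw [mul_div_cancel₀ _ (ne_of_gt hs₀), Real.cos_sub, Real.cos_two_pi,
        Real.sin_two_pi, Real.cos_arccos hx1 hx2]
      ring
    · rw [mul_div_cancel₀ _ (ne_of_gt hs₀), Real.sin_sub, Real.cos_two_pi,
        Real.sin_two_pi, hsin, hsqrt, abs_of_neg (lt_of_not_ge hy0)]
      ring
end

section
/- Let b, ε, ω, s₀ be real numbers with ε > 0, b ≥ 0, s₀ > 0, s₀² ≥ ω², and suppose s₀⁴ + (b²ε² − 2ω²)s₀² + ω⁴ − ε² = 0. Then b s₀ ≤ 1, and the critical delay t_d* := arcsin(b s₀)/s₀ satisfies cos(s₀ t_d*) = (s₀² − ω²)/ε and sin(s₀ t_d*) = b s₀; consequently λ = i s₀ is a root of the characteristic equation (λ² + b ε λ + ω²) e^{λ t_d*} + ε = 0. -/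
/-- Let `b, ε, ω, s₀` be real with `ε > 0`, `b ≥ 0`, `s₀ > 0`, `s₀² ≥ ω²` and suppose
`s₀⁴ + (b²ε² − 2ω²)s₀² + ω⁴ − ε² = 0`.  Then `b s₀ ≤ 1`, and the critical delay
`t_d* = arcsin(b s₀)/s₀` satisfies `cos(s₀ t_d*) = (s₀² − ω²)/ε` and `sin(s₀ t_d*) = b s₀`;
consequently `λ = i s₀` is a root of the characteristic equation
`(λ² + b ε λ + ω²) e^{λ t_d*} + ε = 0`. -/
theorem stmt_6 (b ε ω s₀ : ℝ) (hε : 0 < ε) (hb : 0 ≤ b) (hs₀ : 0 < s₀)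
    (hsω : s₀ ^ 2 ≥ ω ^ 2)
    (hq : s₀ ^ 4 + (b ^ 2 * ε ^ 2 - 2 * ω ^ 2) * s₀ ^ 2 + ω ^ 4 - ε ^ 2 = 0) :
    b * s₀ ≤ 1 ∧
    Real.cos (s₀ * (Real.arcsin (b * s₀) / s₀)) = (s₀ ^ 2 - ω ^ 2) / ε ∧
    Real.sin (s₀ * (Real.arcsin (b * s₀) / s₀)) = b * s₀ ∧
    ((Complex.I * (s₀ : ℂ)) ^ 2 + (b : ℂ) * (ε : ℂ) * (Complex.I * (s₀ : ℂ)) + (ω : ℂ) ^ 2) *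
        Complex.exp (Complex.I * (s₀ : ℂ) * ((Real.arcsin (b * s₀) / s₀ : ℝ) : ℂ)) + (ε : ℂ)
      = 0 := by
  have hbs0 : 0 ≤ b * s₀ := mul_nonneg hb hs₀.le
  have hbs1 : b * s₀ ≤ 1 := by
    nlinarith [sq_nonneg (s₀ ^ 2 - ω ^ 2), mul_pos hε hε, sq_nonneg (b * s₀ - 1),
      sq_nonneg (b * s₀ + 1), mul_pos (mul_pos hε hε) (mul_pos hs₀ hs₀)]
  have hmul : s₀ * (Real.arcsin (b * s₀) / s₀) = Real.arcsin (b * s₀) := by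
    field_simp
  have hsin : Real.sin (Real.arcsin (b * s₀)) = b * s₀ :=
    Real.sin_arcsin (by linarith) hbs1
  have hcos : Real.cos (Real.arcsin (b * s₀)) = (s₀ ^ 2 - ω ^ 2) / ε := by
    rw [Real.cos_arcsin]
    have h1 : 1 - (b * s₀) ^ 2 = ((s₀ ^ 2 - ω ^ 2) / ε) ^ 2 := by
      field_simp
      nlinarith [hq]
    rw [h1, Real.sqrt_sq (div_nonneg (by linarith) hε.le)]
  refine ⟨hbs1, by rw [hmul]; exact hcos, by rw [hmul]; exact hsin, ?_⟩
  have harg : Complex.I * (s₀ : ℂ) * ((Real.arcsin (b * s₀) / s₀ : ℝ) : ℂ)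
      = ((s₀ * (Real.arcsin (b * s₀) / s₀) : ℝ) : ℂ) * Complex.I := by
    push_cast; ring
  rw [harg, Complex.exp_mul_I, ← Complex.ofReal_cos, ← Complex.ofReal_sin,
    hmul, hcos, hsin]
  have hεne : (ε : ℂ) ≠ 0 := by exact_mod_cast hε.ne'
  rw [Complex.ext_iff]
  constructor <;>
    simp [pow_two, Complex.add_re, Complex.add_im, Complex.mul_re, Complex.mul_im,
      Complex.I_re, Complex.I_im, Complex.ofReal_re, Complex.ofReal_im] <;>
    field_simp <;> nlinarith [hq]
end

section
/- Let b, ε, ω, s₀, τ be real numbers with ε ≠ 0 and s₀ ≠ 0. Let λ : ℝ → ℂ be differentiable at τ with λ(τ) = i s₀ and λ'(τ) ≠ 0, and suppose (λ(t)² + b ε λ(t) + ω²) e^{λ(t) t} + ε = 0 for all t in some neighborhood of τ. Then Re(1/λ'(τ)) = (b²ε² + 2(s₀² − ω²)) / (b²ε² s₀² + (s₀² − ω²)²). -/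
/-- Transversality formula.  Let `b, ε, ω, s₀, τ` be real with `ε ≠ 0`, `s₀ ≠ 0`.  Let
`f : ℝ → ℂ` be a branch of characteristic roots as a function of the delay, differentiable
at `τ`, with `f τ = i s₀`, `f' τ ≠ 0`, and satisfying the characteristic equation
`(f(t)² + b ε f(t) + ω²) e^{f(t) t} + ε = 0` for all `t` near `τ`.  Then
`Re(1/f'(τ)) = (b²ε² + 2(s₀² − ω²)) / (b²ε²s₀² + (s₀² − ω²)²)`. -/
theorem stmt_8 (b ε ω s₀ τ : ℝ) (hε : ε ≠ 0) (hs₀ : s₀ ≠ 0) (f : ℝ → ℂ)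
    (hdiff : DifferentiableAt ℝ f τ) (hfτ : f τ = Complex.I * (s₀ : ℂ))
    (hderiv : deriv f τ ≠ 0)
    (hroot : ∀ᶠ t in nhds τ,
      ((f t) ^ 2 + (b : ℂ) * (ε : ℂ) * f t + (ω : ℂ) ^ 2) * Complex.exp (f t * (t : ℂ)) +
        (ε : ℂ) = 0) :
    (1 / deriv f τ).re =
      (b ^ 2 * ε ^ 2 + 2 * (s₀ ^ 2 - ω ^ 2)) /
        (b ^ 2 * ε ^ 2 * s₀ ^ 2 + (s₀ ^ 2 - ω ^ 2) ^ 2) := by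
  set c : ℂ := f τ with hc
  set d : ℂ := deriv f τ with hd
  have hf : HasDerivAt f d τ := hdiff.hasDerivAt
  -- derivative of the inner function t ↦ f t * t
  have hu : HasDerivAt (fun t : ℝ => f t * (t : ℂ)) (d * τ + c) τ := by
    have hid : HasDerivAt (fun t : ℝ => (t : ℂ)) 1 τ := by
      exact Complex.ofRealCLM.hasDerivAt (x := τ)
    have h := hf.mul hid
    rw [mul_one, ← hc] at h
    exact h
  have hQ : HasDerivAt (fun t : ℝ => (f t) ^ 2 + (b : ℂ) * (ε : ℂ) * f t + (ω : ℂ) ^ 2)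
      (2 * c * d + (b : ℂ) * (ε : ℂ) * d) τ := by
    have h1 : HasDerivAt (fun t : ℝ => (f t) ^ 2) (2 * c * d) τ := by
      have h := hf.mul hf
      simp only [pow_two]
      rw [show 2 * c * d = d * f τ + f τ * d by rw [hc]; ring]
      exact h
    have h2 : HasDerivAt (fun t : ℝ => (b : ℂ) * (ε : ℂ) * f t) ((b : ℂ) * (ε : ℂ) * d) τ :=
      (hf.const_mul _)
    simpa using (h1.add h2).add_const ((ω : ℂ) ^ 2)
  have hE : HasDerivAt (fun t : ℝ => Complex.exp (f t * (t : ℂ)))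
      (Complex.exp (c * τ) * (d * τ + c)) τ := by
    simpa [hc] using hu.cexp
  have hg : HasDerivAt (fun t : ℝ =>
      ((f t) ^ 2 + (b : ℂ) * (ε : ℂ) * f t + (ω : ℂ) ^ 2) * Complex.exp (f t * (t : ℂ)) +
        (ε : ℂ))
      ((2 * c * d + (b : ℂ) * (ε : ℂ) * d) * Complex.exp (c * τ)
        + (c ^ 2 + (b : ℂ) * (ε : ℂ) * c + (ω : ℂ) ^ 2) *
          (Complex.exp (c * τ) * (d * τ + c))) τ := by
    simpa [hc] using (hQ.mul hE).add_const (ε : ℂ)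
  -- the function is eventually 0, so the derivative is 0
  have hzero : (2 * c * d + (b : ℂ) * (ε : ℂ) * d) * Complex.exp (c * τ)
      + (c ^ 2 + (b : ℂ) * (ε : ℂ) * c + (ω : ℂ) ^ 2) *
        (Complex.exp (c * τ) * (d * τ + c)) = 0 := by
    have h0 : deriv (fun t : ℝ =>
        ((f t) ^ 2 + (b : ℂ) * (ε : ℂ) * f t + (ω : ℂ) ^ 2) * Complex.exp (f t * (t : ℂ)) +
          (ε : ℂ)) τ = 0 := by
      have heq : (fun t : ℝ =>
          ((f t) ^ 2 + (b : ℂ) * (ε : ℂ) * f t + (ω : ℂ) ^ 2) * Complex.exp (f t * (t : ℂ)) +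
            (ε : ℂ)) =ᶠ[nhds τ] fun _ => (0 : ℂ) := hroot
      rw [heq.deriv_eq]; simp
    rw [hg.deriv] at h0
    exact h0
  -- characteristic equation at τ
  have hchar : (c ^ 2 + (b : ℂ) * (ε : ℂ) * c + (ω : ℂ) ^ 2) * Complex.exp (c * τ)
      + (ε : ℂ) = 0 := by
    have := hroot.self_of_nhds
    simpa [hc, pow_two] using this
  set Q : ℂ := c ^ 2 + (b : ℂ) * (ε : ℂ) * c + (ω : ℂ) ^ 2 with hQdef
  set E : ℂ := Complex.exp (c * τ) with hEdef
  have hQE : Q * E = -(ε : ℂ) := by linear_combination hchar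
  have hεC : (ε : ℂ) ≠ 0 := by exact_mod_cast hε
  clear_value Q E c d
  have hQne : Q ≠ 0 := by
    have hne : Q * E ≠ 0 := hQE ▸ neg_ne_zero.mpr hεC
    exact left_ne_zero_of_mul hne
  have hEne : E ≠ 0 := by rw [hEdef]; exact Complex.exp_ne_zero _
  have hcne : c ≠ 0 := by
    rw [hfτ]; simp [Complex.ext_iff, hs₀]
  -- key algebraic equation:  d * (-(2*c + b*ε) - Q*τ) = Q * c
  have key : d * (-(2 * c + (b : ℂ) * (ε : ℂ)) - Q * τ) = Q * c := by
    have h1 : (2 * c * d + (b : ℂ) * (ε : ℂ) * d) * E + Q * (E * (d * τ + c)) = 0 := hzero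
    -- multiply h1 by Q and use Q*E = -ε, then cancel ε and E
    have h2 : (2 * c * d + (b : ℂ) * (ε : ℂ) * d) * (Q * E)
        + Q * ((Q * E) * (d * τ + c)) = 0 := by linear_combination Q * h1
    rw [hQE] at h2
    have h3 : (ε : ℂ) * (d * (-(2 * c + (b : ℂ) * (ε : ℂ)) - Q * τ) - Q * c) = 0 := by
      linear_combination h2
    rcases mul_eq_zero.mp h3 with h | h
    · exact absurd h hεC
    · linear_combination h
  have hdne : d ≠ 0 := hderiv
  have h1d : 1 / d = (-(2 * c + (b : ℂ) * (ε : ℂ)) - Q * τ) / (Q * c) := by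
    rw [div_eq_div_iff hdne (mul_ne_zero hQne hcne)]
    linear_combination -key
  -- explicit real/imaginary decomposition
  have hQre : Q.re = ω ^ 2 - s₀ ^ 2 := by
    simp [hQdef, hfτ, Complex.ext_iff, pow_two]; try ring
  have hQim : Q.im = b * ε * s₀ := by
    simp [hQdef, hfτ, Complex.ext_iff, pow_two]; try ring
  have hcre : c.re = 0 := by simp [hfτ]
  have hcim : c.im = s₀ := by simp [hfτ]
  have hden : b ^ 2 * ε ^ 2 * s₀ ^ 2 + (s₀ ^ 2 - ω ^ 2) ^ 2 ≠ 0 := by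
    have := Complex.normSq_pos.mpr hQne
    rw [Complex.normSq_apply, hQre, hQim] at this
    nlinarith [this]
  have hWre : (Q * c).re = -(b * ε * s₀ ^ 2) := by
    rw [Complex.mul_re, hQre, hQim, hcre, hcim]; ring
  have hWim : (Q * c).im = (ω ^ 2 - s₀ ^ 2) * s₀ := by
    rw [Complex.mul_im, hQre, hQim, hcre, hcim]; ring
  have hnormSq : Complex.normSq (Q * c) = s₀ ^ 2 * (b ^ 2 * ε ^ 2 * s₀ ^ 2 + (s₀ ^ 2 - ω ^ 2) ^ 2) := by
    rw [Complex.normSq_apply, hWre, hWim]; ring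
  have hNre : (-(2 * c + (b : ℂ) * (ε : ℂ)) - Q * τ).re = -(b * ε) - (ω ^ 2 - s₀ ^ 2) * τ := by
    simp only [Complex.sub_re, Complex.neg_re, Complex.add_re, Complex.mul_re,
      Complex.ofReal_re, Complex.ofReal_im, Complex.re_ofNat, Complex.im_ofNat,
      hQre, hQim, hcre, hcim]
    ring
  have hNim : (-(2 * c + (b : ℂ) * (ε : ℂ)) - Q * τ).im = -(2 * s₀) - b * ε * s₀ * τ := by
    simp only [Complex.sub_im, Complex.neg_im, Complex.add_im, Complex.mul_im,
      Complex.ofReal_re, Complex.ofReal_im, Complex.re_ofNat, Complex.im_ofNat,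
      hQre, hQim, hcre, hcim]
    ring
  rw [h1d, Complex.div_re, hNre, hNim, hWre, hWim, hnormSq, ← add_div,
    div_eq_div_iff (mul_ne_zero (pow_ne_zero 2 hs₀) hden) hden]
  ring
end

section
/- Let b, ε, ω be real numbers with ε > 0, b > 0, ω > 0, and let τ ≥ 0. Suppose that for every t ∈ [0, τ] and every s ∈ ℝ, (−s² + i b ε s + ω²)(cos(s t) + i sin(s t)) + ε ≠ 0, i.e. the characteristic equation has no purely imaginary root for any delay in [0, τ]. Then every root λ ∈ ℂ of the characteristic equation (λ² + b ε λ + ω²) e^{λ τ} + ε = 0 has Re λ < 0. -/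
open Complex Metric Set

lemma aux_zero_of_close {h : ℂ → ℂ} (hh : Differentiable ℂ h) {z₀ : ℂ} {r m : ℝ}
    (hr : 0 < r) (hm : 0 < m) (hz₀ : ‖h z₀‖ < m)
    (hsph : ∀ z ∈ sphere z₀ r, m ≤ ‖h z‖) :
    ∃ z ∈ closedBall z₀ r, h z = 0 := by
  by_contra hcon
  push_neg at hcon
  have hne : ∀ z ∈ closedBall z₀ r, h z ≠ 0 := hcon
  have hd : DiffContOnCl ℂ (fun z => (h z)⁻¹) (ball z₀ r) := by
    constructor
    · exact (hh.differentiableOn).inv (fun z hz => hne z (ball_subset_closedBall hz))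
    · rw [closure_ball z₀ hr.ne']
      exact (hh.continuous.continuousOn).inv₀ hne
  have hfr : ∀ w ∈ frontier (ball z₀ r), ‖(h w)⁻¹‖ ≤ m⁻¹ := by
    intro w hw
    rw [frontier_ball z₀ hr.ne'] at hw
    rw [norm_inv]
    exact inv_anti₀ hm (hsph w hw)
  have hcl : z₀ ∈ closure (ball z₀ r) := by
    rw [closure_ball z₀ hr.ne']; exact mem_closedBall_self hr.le
  have hle := Complex.norm_le_of_forall_mem_frontier_norm_le isBounded_ball hd hfr hcl
  rw [norm_inv] at hle
  have h0 : 0 < ‖h z₀‖ := norm_pos_iff.mpr (hne z₀ (mem_closedBall_self hr.le))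
  have : m ≤ ‖h z₀‖ := by
    have := (inv_le_inv₀ h0 hm).mp hle
    linarith
  linarith

set_option maxHeartbeats 1000000 in
/-- Let `b, ε, ω` be real with `ε > 0`, `b > 0`, `ω > 0`, and let `τ ≥ 0`.  If for every delay
`t ∈ [0, τ]` the characteristic equation has no purely imaginary root, i.e.
`(−s² + i b ε s + ω²)(cos(s t) + i sin(s t)) + ε ≠ 0` for all real `s`, then every complex
root `λ` of `(λ² + b ε λ + ω²) e^{λ τ} + ε = 0` has `Re λ < 0`. -/
theorem stmt_10 (b ε ω τ : ℝ) (hε : 0 < ε) (hb : 0 < b) (hω : 0 < ω) (hτ : 0 ≤ τ)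
    (hno : ∀ t ∈ Set.Icc (0 : ℝ) τ, ∀ s : ℝ,
      ((-(s : ℂ) ^ 2) + Complex.I * (b : ℂ) * (ε : ℂ) * (s : ℂ) + (ω : ℂ) ^ 2) *
          ((Real.cos (s * t) : ℂ) + Complex.I * (Real.sin (s * t) : ℂ)) + (ε : ℂ) ≠ 0) :
    ∀ z : ℂ, (z ^ 2 + (b : ℂ) * (ε : ℂ) * z + (ω : ℂ) ^ 2) * Complex.exp (z * (τ : ℂ)) +
        (ε : ℂ) = 0 → z.re < 0 := by
  intro z hz
  by_contra hre
  push_neg at hre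
  set F : ℝ → ℂ → ℂ := fun t w =>
    (w ^ 2 + (b:ℂ)*(ε:ℂ)*w + (ω:ℂ)^2) * Complex.exp (w * (t:ℂ)) + (ε:ℂ) with hF
  have hcont : Continuous fun p : ℝ × ℂ => F p.1 p.2 := by
    apply Continuous.add _ continuous_const
    apply Continuous.mul
    · fun_prop
    · exact Complex.continuous_exp.comp
        (continuous_snd.mul (Complex.continuous_ofReal.comp continuous_fst))
  have hdiff : ∀ t : ℝ, Differentiable ℂ (F t) := by
    intro t
    apply Differentiable.add _ (differentiable_const _)
    exact ((differentiable_id.pow 2).add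
        ((differentiable_const _).mul differentiable_id) |>.add (differentiable_const _)).mul
      ((differentiable_id.mul_const _).cexp)
  -- Step 1 : a priori bound on roots in the closed right half plane
  set R : ℝ := 1 + ε + b*ε + ω^2 with hR
  have hbound : ∀ t : ℝ, 0 ≤ t → ∀ w : ℂ, 0 ≤ w.re → F t w = 0 → ‖w‖ ≤ R := by
    intro t ht w hw hFw
    have heq : (w ^ 2 + (b:ℂ)*(ε:ℂ)*w + (ω:ℂ)^2) * Complex.exp (w * (t:ℂ)) = -(ε:ℂ) :=
      eq_neg_of_add_eq_zero_left hFw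
    have hnorm : ‖w ^ 2 + (b:ℂ)*(ε:ℂ)*w + (ω:ℂ)^2‖ * ‖Complex.exp (w * (t:ℂ))‖ = ε := by
      rw [← norm_mul, heq, norm_neg, Complex.norm_real, Real.norm_of_nonneg hε.le]
    have hexp1 : (1:ℝ) ≤ ‖Complex.exp (w * (t:ℂ))‖ := by
      rw [Complex.norm_exp]
      have : (0:ℝ) ≤ (w * (t:ℂ)).re := by
        simp [Complex.mul_re]
        positivity
      calc (1:ℝ) = Real.exp 0 := Real.exp_zero.symm
        _ ≤ _ := Real.exp_le_exp.mpr this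
    have hA : ‖w ^ 2 + (b:ℂ)*(ε:ℂ)*w + (ω:ℂ)^2‖ ≤ ε := by
      nlinarith [norm_nonneg (w ^ 2 + (b:ℂ)*(ε:ℂ)*w + (ω:ℂ)^2)]
    have hsq : ‖w‖^2 ≤ ε + b*ε*‖w‖ + ω^2 := by
      have h1 : ‖w^2‖ ≤ ‖w ^ 2 + (b:ℂ)*(ε:ℂ)*w + (ω:ℂ)^2‖ + ‖(b:ℂ)*(ε:ℂ)*w‖ + ‖(ω:ℂ)^2‖ := by
        calc ‖w^2‖ = ‖(w ^ 2 + (b:ℂ)*(ε:ℂ)*w + (ω:ℂ)^2) - (b:ℂ)*(ε:ℂ)*w - (ω:ℂ)^2‖ := by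
              ring_nf
          _ ≤ _ := by
              calc _ ≤ ‖(w ^ 2 + (b:ℂ)*(ε:ℂ)*w + (ω:ℂ)^2) - (b:ℂ)*(ε:ℂ)*w‖ + ‖(ω:ℂ)^2‖ :=
                    norm_sub_le _ _
                _ ≤ _ := by gcongr; exact norm_sub_le _ _
      have h2 : ‖w^2‖ = ‖w‖^2 := by rw [norm_pow]
      have h3 : ‖(b:ℂ)*(ε:ℂ)*w‖ = b*ε*‖w‖ := by
        rw [norm_mul, norm_mul, Complex.norm_real, Complex.norm_real,
          Real.norm_of_nonneg hb.le, Real.norm_of_nonneg hε.le]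
      have h4 : ‖((ω:ℂ))^2‖ = ω^2 := by
        rw [norm_pow, Complex.norm_real, Real.norm_of_nonneg hω.le]
      rw [h2, h3, h4] at h1
      linarith
    nlinarith [norm_nonneg w]
  -- compact region
  set K : Set ℂ := {w : ℂ | 0 ≤ w.re} ∩ closedBall 0 R with hK
  have hKcomp : IsCompact K :=
    (isCompact_closedBall 0 R).inter_left (isClosed_le continuous_const Complex.continuous_re)
  set S : Set (ℝ × ℂ) := (Set.Icc (0:ℝ) τ ×ˢ K) ∩ {p | F p.1 p.2 = 0} with hS
  have hScomp : IsCompact S :=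
    ((isCompact_Icc.prod hKcomp).inter_right (isClosed_eq hcont continuous_const))
  set T : Set ℝ := Prod.fst '' S with hT
  have hTcomp : IsCompact T := hScomp.image continuous_fst
  have hmemT : ∀ t ∈ Set.Icc (0:ℝ) τ, ∀ w : ℂ, 0 ≤ w.re → F t w = 0 → t ∈ T := by
    intro t ht w hw hFw
    refine ⟨(t, w), ⟨⟨ht, hw, ?_⟩, hFw⟩, rfl⟩
    simpa [dist_eq_norm] using hbound t ht.1 w hw hFw
  -- no purely imaginary roots
  have hIm : ∀ t ∈ Set.Icc (0:ℝ) τ, ∀ w : ℂ, w.re = 0 → F t w ≠ 0 := by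
    intro t ht w hw0
    have hwI : w = (w.im : ℂ) * Complex.I := by
      apply Complex.ext <;> simp [hw0]
    set s : ℝ := w.im with hs
    have hrw : F t w = ((-(s : ℂ) ^ 2) + Complex.I * (b : ℂ) * (ε : ℂ) * (s : ℂ) + (ω : ℂ) ^ 2) *
          ((Real.cos (s * t) : ℂ) + Complex.I * (Real.sin (s * t) : ℂ)) + (ε : ℂ) := by
      rw [hF]
      simp only
      rw [hwI]
      have h1 : ((s:ℂ) * Complex.I) * (t:ℂ) = ((s*t : ℝ) : ℂ) * Complex.I := by
        push_cast; ring
      rw [h1, Complex.exp_mul_I, ← Complex.ofReal_cos, ← Complex.ofReal_sin]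
      linear_combination ((s:ℂ)^2 * ((Real.cos (s*t) : ℂ) + (Real.sin (s*t) : ℂ) * Complex.I)) *
        Complex.I_sq
    rw [hrw]
    exact hno t ht s
  -- 0 ∉ T
  have hzeroT : (0:ℝ) ∉ T := by
    rintro ⟨⟨t, w⟩, ⟨⟨htI, hwK⟩, hFw⟩, ht0⟩
    simp only at ht0
    subst ht0
    have hwre : 0 ≤ w.re := hwK.1
    have : F 0 w = w ^ 2 + (b:ℂ)*(ε:ℂ)*w + (ω:ℂ)^2 + (ε:ℂ) := by
      rw [hF]; simp
    have hFw0 : F 0 w = 0 := hFw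
    rw [this] at hFw0
    rw [Complex.ext_iff] at hFw0
    obtain ⟨h1, h2⟩ := hFw0
    simp [pow_two, Complex.mul_re, Complex.mul_im] at h1 h2
    have him : w.im = 0 := by
      by_contra him
      have hpos : 0 < 2 * w.re + b * ε := by nlinarith
      have : w.im * (2 * w.re + b * ε) = 0 := by linarith
      rcases mul_eq_zero.mp this with h | h
      · exact him h
      · linarith
    rw [him] at h1
    nlinarith [mul_nonneg hwre hwre, mul_nonneg (mul_nonneg hb.le hε.le) hwre, mul_pos hω hω]
  -- openness of T within Icc
  have hopen : ∀ t₀ ∈ T, ∃ V : Set ℝ, IsOpen V ∧ t₀ ∈ V ∧ ∀ t ∈ V ∩ Set.Icc (0:ℝ) τ, t ∈ T := by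
    rintro t₀ ⟨⟨t₁, z₀⟩, ⟨⟨htI, hzK⟩, hFz⟩, rfl⟩
    simp only at hFz hzK htI ⊢
    have hz₀re : 0 < z₀.re := lt_of_le_of_ne hzK.1 (fun h => hIm t₁ htI z₀ h.symm hFz)
    rcases ((hdiff t₁).analyticAt z₀).eventually_eq_zero_or_eventually_ne_zero with hcase | hcase
    · exfalso
      have hAOn : AnalyticOnNhd ℂ (F t₁) Set.univ := fun x _ => (hdiff t₁).analyticAt x
      have := hAOn.eqOn_zero_of_preconnected_of_eventuallyEq_zero isPreconnected_univ
        (mem_univ z₀) hcase (mem_univ 0)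
      have h0 : F t₁ 0 = (ω:ℂ)^2 + (ε:ℂ) := by rw [hF]; simp
      rw [h0] at this
      have : ((ω^2 + ε : ℝ) : ℂ) = 0 := by push_cast; simpa using this
      rw [Complex.ofReal_eq_zero] at this
      nlinarith
    · rw [eventually_nhdsWithin_iff] at hcase
      rw [Metric.eventually_nhds_iff] at hcase
      obtain ⟨δ, hδ, hδne⟩ := hcase
      set r : ℝ := min (δ/2) (z₀.re/2) with hrdef
      have hr : 0 < r := lt_min (by linarith) (by linarith)
      have hsph_ne : (sphere z₀ r).Nonempty := NormedSpace.sphere_nonempty.mpr hr.le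
      obtain ⟨w₀, hw₀, hwmin⟩ := (isCompact_sphere z₀ r).exists_isMinOn hsph_ne
        ((continuous_norm.comp (hdiff t₁).continuous).continuousOn)
      set m : ℝ := ‖F t₁ w₀‖ with hm
      have hmpos : 0 < m := by
        rw [hm, norm_pos_iff]
        apply hδne
        · rw [mem_sphere_iff_norm] at hw₀
          rw [dist_eq_norm, hw₀]
          have : r ≤ δ/2 := min_le_left _ _
          linarith
        · intro h
          rw [mem_sphere_iff_norm, h] at hw₀
          simp at hw₀
          linarith
      set N : Set (ℝ × ℂ) := {p | ‖F p.1 p.2 - F t₁ p.2‖ < m/2} with hN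
      have hNopen : IsOpen N := by
        apply isOpen_lt _ continuous_const
        exact (hcont.sub (hcont.comp ((continuous_const.prodMk continuous_snd)))).norm
      have hsub : ({t₁} : Set ℝ) ×ˢ closedBall z₀ r ⊆ N := by
        rintro ⟨t, w⟩ ⟨ht, hwb⟩
        simp only [mem_singleton_iff] at ht
        subst ht
        simp [hN]
        positivity
      obtain ⟨u, v, huo, hvo, hu, hv, huv⟩ := generalized_tube_lemma isCompact_singleton
        (isCompact_closedBall z₀ r) hNopen hsub
      refine ⟨u, huo, hu rfl, ?_⟩
      rintro t ⟨htu, htIcc⟩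
      have hclose : ∀ w ∈ closedBall z₀ r, ‖F t w - F t₁ w‖ < m/2 := by
        intro w hw
        have h := huv (Set.mk_mem_prod htu (hv hw))
        simpa [hN] using h
      have hz₀close : ‖F t z₀‖ < m/2 := by
        have := hclose z₀ (mem_closedBall_self hr.le)
        rwa [hFz, sub_zero] at this
      have hsph : ∀ w ∈ sphere z₀ r, m/2 ≤ ‖F t w‖ := by
        intro w hw
        have h1 : m ≤ ‖F t₁ w‖ := isMinOn_iff.mp hwmin w hw
        have h2 : ‖F t w - F t₁ w‖ < m/2 := hclose w (sphere_subset_closedBall hw)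
        have h3 := norm_sub_norm_le (F t₁ w) (F t w)
        rw [← norm_neg (F t₁ w - F t w), neg_sub] at h3
        linarith
      obtain ⟨w, hwball, hwzero⟩ := aux_zero_of_close (hdiff t) hr (by linarith) hz₀close hsph
      have hwre : 0 ≤ w.re := by
        have h1 : |(w - z₀).re| ≤ ‖w - z₀‖ := Complex.abs_re_le_norm _
        have h2 : ‖w - z₀‖ ≤ r := by rwa [mem_closedBall, dist_eq_norm] at hwball
        have h3 : r ≤ z₀.re/2 := min_le_right _ _
        have h4 : (w - z₀).re = w.re - z₀.re := by simp
        rw [h4] at h1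
        have := abs_le.mp h1
        linarith [this.1]
      exact hmemT t htIcc w hwre hwzero
  -- glue with connectedness
  have key : ∀ t₀ : ℝ, ∃ V : Set ℝ, IsOpen V ∧ t₀ ∈ V ∧
      (t₀ ∈ T → ∀ t ∈ V ∩ Set.Icc (0:ℝ) τ, t ∈ T) := by
    intro t₀
    by_cases h : t₀ ∈ T
    · obtain ⟨V, h1, h2, h3⟩ := hopen t₀ h; exact ⟨V, h1, h2, fun _ => h3⟩
    · exact ⟨Set.univ, isOpen_univ, mem_univ _, fun h' => absurd h' h⟩
  choose V hVopen hVmem hVsub using key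
  set U : Set ℝ := ⋃ t₀ ∈ T, V t₀ with hU
  have hUopen : IsOpen U := isOpen_biUnion fun t₀ _ => hVopen t₀
  have hTU : T ⊆ U := fun t₀ h => mem_biUnion h (hVmem t₀)
  have hUT : U ∩ Set.Icc (0:ℝ) τ ⊆ T := by
    rintro t ⟨htU, htIcc⟩
    obtain ⟨t₀, ht₀, htV⟩ := mem_iUnion₂.mp htU
    exact hVsub t₀ ht₀ t ⟨htV, htIcc⟩
  have hτT : τ ∈ T := hmemT τ ⟨hτ, le_refl τ⟩ z hre hz
  obtain ⟨t, htI, htU, htC⟩ := isPreconnected_Icc (a := (0:ℝ)) (b := τ) U Tᶜ hUopen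
    hTcomp.isClosed.isOpen_compl
    (fun t _ => (Classical.em (t ∈ T)).elim (fun h => Or.inl (hTU h)) Or.inr)
    ⟨τ, ⟨hτ, le_refl τ⟩, hTU hτT⟩ ⟨0, ⟨le_refl 0, hτ⟩, hzeroT⟩
  exact htC (hUT ⟨htU, htI⟩)
end

section
/- Let a, ε, c be real numbers with a > 0, ε > 0, c > 0, and let r : [0, ∞) → ℝ be differentiable with r'(t) = −(ε r(t)/8)(a r(t)² − 4c) for all t ≥ 0 and r(0) > 0. Then r(t) → 2√(c/a) as t → ∞. -/
open Real Set Filter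


/-- Let `a, ε, c` be real with `a > 0`, `ε > 0`, `c > 0`, and let `r : ℝ → ℝ` satisfy the
averaged amplitude equation `r'(t) = −(ε r(t)/8)(a r(t)² − 4c)` for all `t ≥ 0` with
`r(0) > 0`.  Then `r(t) → 2√(c/a)` as `t → ∞`. -/
theorem stmt_13 (a ε c : ℝ) (ha : 0 < a) (hε : 0 < ε) (hc : 0 < c) (r : ℝ → ℝ)
    (hr : ∀ t : ℝ, 0 ≤ t → HasDerivAt r (-(ε * r t / 8) * (a * (r t) ^ 2 - 4 * c)) t)
    (h0 : 0 < r 0) :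
    Filter.Tendsto r Filter.atTop (nhds (2 * Real.sqrt (c / a))) := by
  set K : ℝ := 4 * c / a with hKdef
  set k : ℝ := ε * a / 4 with hkdef
  have hK0 : 0 < K := by rw [hKdef]; positivity
  have hk0 : 0 < k := by rw [hkdef]; positivity
  set u : ℝ → ℝ := fun t => (r t) ^ 2 with hudef
  set u0 : ℝ := (r 0) ^ 2 with hu0def
  have hu0 : 0 < u0 := by positivity
  clear_value K k u0
  -- derivative of u
  have hu' : ∀ t, 0 ≤ t → HasDerivAt u (k * u t * (K - u t)) t := by
    intro t ht
    have h : HasDerivAt (fun x => r x ^ 2) _ t := (hr t ht).fun_pow 2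
    convert h using 1
    simp only [hudef, hKdef, hkdef]
    field_simp
    ring
  -- explicit logistic solution
  set d : ℝ → ℝ := fun t => u0 + (K - u0) * Real.exp (-(k * K) * t) with hddef
  have hdpos : ∀ t, 0 ≤ t → 0 < d t := by
    intro t ht
    rcases le_or_gt u0 K with h | h
    · have : 0 ≤ (K - u0) * Real.exp (-(k * K) * t) := by
        apply mul_nonneg (by linarith) (Real.exp_pos _).le
      simp only [hddef]; linarith
    · have he1 : Real.exp (-(k * K) * t) ≤ 1 := by
        apply Real.exp_le_one_iff.mpr
        nlinarith [mul_pos hk0 hK0]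
      have : (K - u0) * Real.exp (-(k * K) * t) ≥ (K - u0) * 1 := by
        apply mul_le_mul_of_nonpos_left he1 (by linarith)
      simp only [hddef]; nlinarith
  set w : ℝ → ℝ := fun t => K * u0 / d t with hwdef
  have hwpos : ∀ t, 0 ≤ t → 0 < w t := fun t ht =>
    div_pos (mul_pos hK0 hu0) (hdpos t ht)
  -- derivative of w
  have hd' : ∀ t, HasDerivAt d ((K - u0) * (Real.exp (-(k * K) * t) * (-(k * K)))) t := by
    intro t
    rw [hddef]
    simpa using (((hasDerivAt_id t).const_mul (-(k * K))).exp.const_mul (K - u0)).const_add u0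
  have hw' : ∀ t, 0 ≤ t → HasDerivAt w (k * w t * (K - w t)) t := by
    intro t ht
    have hdne : d t ≠ 0 := (hdpos t ht).ne'
    have h := (hasDerivAt_const t (K * u0)).div (hd' t) hdne
    have h2 : HasDerivAt w ((0 * d t - K * u0 * ((K - u0) * (Real.exp (-(k * K) * t) * -(k * K)))) / d t ^ 2) t := by
      rw [hwdef]; exact h
    convert h2 using 1
    simp only [hwdef]
    rw [hddef] at hdne ⊢
    simp only at hdne ⊢
    set E := Real.exp (-(k * K) * t) with hE
    set D := u0 + (K - u0) * E with hD2
    clear_value D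
    field_simp
    rw [hD2]
    ring
  -- uniqueness: u = w on [0, ∞)
  have key : ∀ t, 0 ≤ t → u t = w t := by
    intro T hT
    have hucont : ContinuousOn u (Icc 0 T) := fun t ht =>
      ((hu' t ht.1).continuousAt).continuousWithinAt
    have hwcont : ContinuousOn w (Icc 0 T) := fun t ht =>
      ((hw' t ht.1).continuousAt).continuousWithinAt
    obtain ⟨M1, hM1⟩ := isCompact_Icc.exists_bound_of_continuousOn hucont
    obtain ⟨M2, hM2⟩ := isCompact_Icc.exists_bound_of_continuousOn hwcont
    set B : ℝ := max M1 M2 with hBdef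
    have hBnn : 0 ≤ B := le_trans (norm_nonneg (u 0)) (le_trans (hM1 0 ⟨le_refl 0, hT⟩) (le_max_left _ _))
    have hCnn : 0 ≤ k * (|K| + 2 * B) := by positivity
    have hlip : ∀ t : ℝ, LipschitzOnWith (k * (|K| + 2 * B)).toNNReal
        (fun x : ℝ => k * x * (K - x)) (Icc (-B) B) := by
      intro t
      rw [lipschitzOnWith_iff_dist_le_mul]
      intro x hx y hy
      rw [Real.dist_eq, Real.dist_eq, Real.coe_toNNReal _ hCnn]
      have h1 : k * x * (K - x) - (k * y * (K - y)) = k * ((x - y) * (K - (x + y))) := by ring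
      rw [h1, abs_mul, abs_mul, abs_of_pos hk0]
      have hxy : |K - (x + y)| ≤ |K| + 2 * B := by
        simp only [mem_Icc] at hx hy
        rw [abs_le]
        constructor <;> cases' abs_le.mp (le_refl |K|) with h2 h3 <;> nlinarith [neg_abs_le K, le_abs_self K]
      calc k * (|x - y| * |K - (x + y)|) ≤ k * (|x - y| * (|K| + 2 * B)) := by
            apply mul_le_mul_of_nonneg_left _ hk0.le
            exact mul_le_mul_of_nonneg_left hxy (abs_nonneg _)
        _ = k * (|K| + 2 * B) * |x - y| := by ring
    have hus : ∀ t ∈ Ico 0 T, u t ∈ Icc (-B) B := by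
      intro t ht
      have := hM1 t ⟨ht.1, ht.2.le⟩
      rw [Real.norm_eq_abs] at this
      constructor <;> cases' abs_le.mp (le_trans this (le_max_left M1 M2)) with h2 h3 <;> linarith
    have hws : ∀ t ∈ Ico 0 T, w t ∈ Icc (-B) B := by
      intro t ht
      have := hM2 t ⟨ht.1, ht.2.le⟩
      rw [Real.norm_eq_abs] at this
      constructor <;> cases' abs_le.mp (le_trans this (le_max_right M1 M2)) with h2 h3 <;> linarith
    have huw0 : u 0 = w 0 := by
      simp only [hwdef, hddef, hudef, mul_zero, neg_zero, Real.exp_zero, mul_one]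
      rw [← hu0def, show u0 + (K - u0) = K by ring, mul_comm,
        mul_div_assoc, div_self hK0.ne', mul_one]
    have := ODE_solution_unique_of_mem_Icc_right (v := fun _ x => k * x * (K - x))
      (s := fun _ => Icc (-B) B) (fun t _ => hlip t) hucont
      (fun t ht => (hu' t ht.1).hasDerivWithinAt) hus hwcont
      (fun t ht => (hw' t ht.1).hasDerivWithinAt) hws huw0
    exact this ⟨hT, le_refl T⟩
  -- r stays positive
  have hrcont : ContinuousOn r (Ici 0) := fun t ht =>
    ((hr t ht).continuousAt).continuousWithinAt
  have hrne : ∀ s, 0 ≤ s → r s ≠ 0 := by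
    intro s hs hzero
    have h1 := key s hs
    have h2 := hwpos s hs
    rw [hudef] at h1
    simp only [hzero] at h1
    rw [← h1] at h2
    norm_num at h2
  have hrpos : ∀ t, 0 ≤ t → 0 < r t := by
    intro t ht
    by_contra h
    push_neg at h
    have hlt : r t < 0 := lt_of_le_of_ne h (hrne t ht)
    have hsub : Icc (r t) (r 0) ⊆ r '' (Icc 0 t) :=
      intermediate_value_Icc' ht (hrcont.mono (fun x hx => hx.1))
    obtain ⟨z, hz, hz0⟩ := hsub ⟨hlt.le, h0.le⟩
    exact hrne z hz.1 hz0
  -- limit of w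
  have hexp : Tendsto (fun t : ℝ => Real.exp (-(k * K) * t)) atTop (nhds 0) := by
    apply Real.tendsto_exp_atBot.comp
    exact (tendsto_const_mul_atBot_of_neg (show -(k * K) < 0 by nlinarith)).mpr tendsto_id
  have hdlim : Tendsto d atTop (nhds u0) := by
    have h : Tendsto (fun t => u0 + (K - u0) * Real.exp (-(k * K) * t)) atTop
        (nhds (u0 + (K - u0) * 0)) := tendsto_const_nhds.add (tendsto_const_nhds.mul hexp)
    simpa [hddef] using h
  have hwlim : Tendsto w atTop (nhds K) := by
    have h := Tendsto.div (tendsto_const_nhds (x := K * u0) (f := atTop)) hdlim hu0.ne'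
    convert h using 2
    · rfl
    rw [mul_div_assoc, div_self hu0.ne', mul_one]
  have hslim : Tendsto (fun t => Real.sqrt (w t)) atTop (nhds (Real.sqrt K)) :=
    (Real.continuous_sqrt.tendsto K).comp hwlim
  have heq : (fun t => Real.sqrt (w t)) =ᶠ[atTop] r := by
    filter_upwards [eventually_ge_atTop (0:ℝ)] with t ht
    rw [← key t ht]
    simp only [hudef]
    exact Real.sqrt_sq (hrpos t ht).le
  have hfin := hslim.congr' heq
  have hsq : Real.sqrt K = 2 * Real.sqrt (c / a) := by
    rw [hKdef, show 4 * c / a = 2 ^ 2 * (c / a) by ring,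
      Real.sqrt_mul (by norm_num : (0:ℝ) ≤ 2 ^ 2), Real.sqrt_sq (by norm_num : (0:ℝ) ≤ 2)]
  rwa [hsq] at hfin
end

section
/- Fix real numbers a, b, γ, r, ε, φ and ω > 0, and for Ω ∈ ℝ define B₁(Ω) = (a γ r² ω ε/(32π)) · ( −8ω cos(2φ)/(4ω² − Ω²) − 8ω cos(4φ)/(16ω² − Ω²) + 2cos(2(πΩ/ω + φ))/(2ω + Ω) + cos(2πΩ/ω + 4φ)/(4ω + Ω) + 2cos(2φ − 2πΩ/ω)/(2ω − Ω) + cos(4φ − 2πΩ/ω)/(4ω − Ω) ) and B₂(Ω) = [b γ ω ε/(2π(8ω² − 2Ω²))] · ( Ω sin(2φ) sin(2πΩ/ω) − 4ω cos(2φ) sin²(πΩ/ω) ). Then the limit of B₁(Ω) + B₂(Ω) as Ω → 2ω (through values Ω ≠ 2ω in a punctured neighborhood of 2ω) equals −(1/8) γ ε sin(2φ)(a r² + 2b). -/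
open Real Filter

private lemma cos_four_pi' : Real.cos (4*π) = 1 := by
  rw [show (4:ℝ)*π = 2*π + 2*π by ring, Real.cos_add, Real.sin_two_pi, Real.cos_two_pi]; ring

private lemma cos_four_pi_add' (x : ℝ) : Real.cos (4*π + x) = Real.cos x := by
  rw [show 4*π + x = (x + 2*π) + 2*π by ring, Real.cos_add_two_pi, Real.cos_add_two_pi]

private lemma cos_two_mul_twopi_add' (x : ℝ) : Real.cos (2*(2*π + x)) = Real.cos (2*x) := by
  rw [show 2*(2*π + x) = 4*π + 2*x by ring, cos_four_pi_add']

private lemma cos_sub_four_pi' (x : ℝ) : Real.cos (x - 4*π) = Real.cos x := by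
  rw [show x - 4*π = (x - 2*π) - 2*π by ring, Real.cos_sub_two_pi, Real.cos_sub_two_pi]

private lemma sin_sub_four_pi' (x : ℝ) : Real.sin (x - 4*π) = Real.sin x := by
  rw [show x - 4*π = (x - 2*π) - 2*π by ring, Real.sin_sub_two_pi, Real.sin_sub_two_pi]

set_option maxHeartbeats 1000000 in
/-- Removable singularity at the resonance `Ω = 2ω`:  the parametric-forcing contribution
`B₁(Ω) + B₂(Ω)` to the averaged phase equation tends, as `Ω → 2ω` through `Ω ≠ 2ω`, to
`−(1/8) γ ε sin(2φ)(a r² + 2b)`. -/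
theorem stmt_16 (a b γ r ε φ ω : ℝ) (hω : 0 < ω) :
    Tendsto (fun Ω : ℝ =>
        a * γ * r ^ 2 * ω * ε / (32 * π) *
          (-8 * ω * Real.cos (2 * φ) / (4 * ω ^ 2 - Ω ^ 2) -
            8 * ω * Real.cos (4 * φ) / (16 * ω ^ 2 - Ω ^ 2) +
            2 * Real.cos (2 * (π * Ω / ω + φ)) / (2 * ω + Ω) +
            Real.cos (2 * π * Ω / ω + 4 * φ) / (4 * ω + Ω) +
            2 * Real.cos (2 * φ - 2 * π * Ω / ω) / (2 * ω - Ω) +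
            Real.cos (4 * φ - 2 * π * Ω / ω) / (4 * ω - Ω)) +
        b * γ * ω * ε / (2 * π * (8 * ω ^ 2 - 2 * Ω ^ 2)) *
          (Ω * Real.sin (2 * φ) * Real.sin (2 * π * Ω / ω) -
            4 * ω * Real.cos (2 * φ) * Real.sin (π * Ω / ω) ^ 2))
      (nhdsWithin (2 * ω) {(2 * ω)}ᶜ)
      (nhds (-(1 / 8) * γ * ε * Real.sin (2 * φ) * (a * r ^ 2 + 2 * b))) := by
  have hω' : ω ≠ 0 := ne_of_gt hω
  have hπ : (π:ℝ) ≠ 0 := Real.pi_ne_zero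
  -- the singular numerator N and regular part R
  set N : ℝ → ℝ := fun Ω =>
    a * γ * r ^ 2 * ω * ε / (32 * π) *
      (-8 * ω * Real.cos (2 * φ) / (2 * ω + Ω) + 2 * Real.cos (2 * φ - 2 * π * Ω / ω)) +
    b * γ * ω * ε / (2 * π) *
      ((Ω * Real.sin (2 * φ) * Real.sin (2 * π * Ω / ω) -
        4 * ω * Real.cos (2 * φ) * Real.sin (π * Ω / ω) ^ 2) / (2 * (2 * ω + Ω))) with hNdef
  set R : ℝ → ℝ := fun Ω =>
    a * γ * r ^ 2 * ω * ε / (32 * π) *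
      (-(8 * ω * Real.cos (4 * φ) / (16 * ω ^ 2 - Ω ^ 2)) +
        2 * Real.cos (2 * (π * Ω / ω + φ)) / (2 * ω + Ω) +
        Real.cos (2 * π * Ω / ω + 4 * φ) / (4 * ω + Ω) +
        Real.cos (4 * φ - 2 * π * Ω / ω) / (4 * ω - Ω)) with hRdef
  -- derivative of N at 2ω
  have hdenne : 2 * ω + 2 * ω ≠ 0 := by positivity
  have hden : HasDerivAt (fun Ω : ℝ => 2 * ω + Ω) 1 (2 * ω) := by
    simpa using (hasDerivAt_id (2*ω)).const_add (2*ω)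
  have h1 := (hasDerivAt_const (2*ω) (-8 * ω * Real.cos (2*φ))).div hden hdenne
  have harg : HasDerivAt (fun Ω : ℝ => 2 * π * Ω / ω) (2 * π / ω) (2 * ω) := by
    simpa using ((hasDerivAt_id (2*ω)).const_mul (2*π)).div_const ω
  have hargβ : HasDerivAt (fun Ω : ℝ => π * Ω / ω) (π / ω) (2 * ω) := by
    simpa using ((hasDerivAt_id (2*ω)).const_mul π).div_const ω
  have h2inner : HasDerivAt (fun Ω : ℝ => 2 * φ - 2 * π * Ω / ω) (-(2 * π / ω)) (2 * ω) := by
    simpa using (hasDerivAt_const (2*ω) (2*φ)).fun_sub harg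
  have h2 := (h2inner.cos).const_mul (2:ℝ)
  have hpart1 := (h1.add h2).const_mul (a * γ * r ^ 2 * ω * ε / (32 * π))
  have ht1 := ((hasDerivAt_id (2*ω)).mul_const (Real.sin (2*φ))).mul harg.sin
  have ht2 := (hargβ.sin.pow 2).const_mul (4 * ω * Real.cos (2*φ))
  have hdenom2 : HasDerivAt (fun Ω : ℝ => 2 * (2 * ω + Ω)) 2 (2 * ω) := by
    simpa using hden.const_mul (2:ℝ)
  have hdenom2ne : 2 * (2 * ω + 2 * ω) ≠ 0 := by positivity
  have h3 := ((ht1.sub ht2).div hdenom2 hdenom2ne).const_mul (b * γ * ω * ε / (2 * π))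
  have hD := hpart1.add h3
  simp only [id_eq, Pi.add_def, Pi.sub_def, Pi.mul_def, Pi.div_def, Pi.pow_def] at hD
  rw [← hNdef] at hD
  have hslope := hasDerivAt_iff_tendsto_slope.mp hD
  -- continuity of R at 2ω
  have hRc : ContinuousAt R (2 * ω) := by
    apply ContinuousAt.mul continuousAt_const
    apply ContinuousAt.add
    apply ContinuousAt.add
    apply ContinuousAt.add
    · exact (ContinuousAt.div continuousAt_const (by fun_prop) (by nlinarith)).neg
    · exact ContinuousAt.div (by fun_prop) (by fun_prop) (by nlinarith)
    · exact ContinuousAt.div (by fun_prop) (by fun_prop) (by nlinarith)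
    · exact ContinuousAt.div (by fun_prop) (by fun_prop) (by nlinarith)
  have hmain := (hslope.neg).add (hRc.tendsto.mono_left nhdsWithin_le_nhds)
  -- N vanishes at 2ω
  have e1 : 2 * π * (2 * ω) / ω = 4 * π := by field_simp; ring
  have e2 : π * (2 * ω) / ω = 2 * π := by field_simp
  have hsin4 : Real.sin (4 * π) = 0 := by
    rw [show (4:ℝ) * π = 2*π + 2*π by ring, Real.sin_add, Real.sin_two_pi, Real.cos_two_pi]; ring
  have hN0 : N (2 * ω) = 0 := by
    simp only [hNdef, e1, e2, cos_sub_four_pi', hsin4, Real.sin_two_pi]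
    field_simp
    ring
  refine Filter.Tendsto.congr' (f₁ := fun x => -slope N (2 * ω) x + R x) ?_ ?_
  swap
  · -- the limit value
    convert hmain using 2
    rw [hRdef]
    simp only [e1, e2, cos_sub_four_pi', sin_sub_four_pi', hsin4, cos_four_pi',
      cos_four_pi_add', cos_two_mul_twopi_add', Real.sin_two_pi, Real.cos_two_pi,
      show (2*π*(2*ω)/ω + 4*φ) = 4*π + 4*φ by rw [e1],
      show (2*(π*(2*ω)/ω + φ)) = 2*(2*π + φ) by rw [e2]]
    field_simp [hω', hπ]
    ring_nf
  · -- eventual equality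
    have hIoo : Set.Ioo ω (3*ω) ∈ nhds (2*ω) := Ioo_mem_nhds (by linarith) (by linarith)
    filter_upwards [mem_nhdsWithin_of_mem_nhds hIoo, self_mem_nhdsWithin] with Ω hm hne
    simp only [Set.mem_Ioo] at hm
    simp only [Set.mem_compl_iff, Set.mem_singleton_iff] at hne
    have d1 : 2 * ω + Ω ≠ 0 := by nlinarith
    have d2 : 2 * ω - Ω ≠ 0 := sub_ne_zero.mpr (Ne.symm hne)
    have d3 : 4 * ω ^ 2 - Ω ^ 2 ≠ 0 := by
      rw [show 4 * ω ^ 2 - Ω ^ 2 = (2*ω - Ω) * (2*ω + Ω) by ring]; exact mul_ne_zero d2 d1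
    have d4 : 16 * ω ^ 2 - Ω ^ 2 ≠ 0 := by nlinarith
    have d5 : 4 * ω + Ω ≠ 0 := by nlinarith
    have d6 : 4 * ω - Ω ≠ 0 := by nlinarith
    have d7 : 8 * ω ^ 2 - 2 * Ω ^ 2 ≠ 0 := by
      rw [show 8 * ω ^ 2 - 2 * Ω ^ 2 = 2 * ((2*ω - Ω) * (2*ω + Ω)) by ring]
      exact mul_ne_zero two_ne_zero (mul_ne_zero d2 d1)
    have d8 : Ω - 2 * ω ≠ 0 := sub_ne_zero.mpr hne
    rw [slope_def_field, hN0, sub_zero, hNdef, hRdef]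
    beta_reduce
    have i3 : (4 * ω ^ 2 - Ω ^ 2)⁻¹ = (2 * ω - Ω)⁻¹ * (2 * ω + Ω)⁻¹ := by
      rw [← mul_inv, show (2 * ω - Ω) * (2 * ω + Ω) = 4 * ω ^ 2 - Ω ^ 2 by ring]
    have i7 : (8 * ω ^ 2 - 2 * Ω ^ 2)⁻¹ = 2⁻¹ * ((2 * ω - Ω)⁻¹ * (2 * ω + Ω)⁻¹) := by
      rw [← mul_inv, ← mul_inv, show (2:ℝ) * ((2 * ω - Ω) * (2 * ω + Ω)) = 8 * ω ^ 2 - 2 * Ω ^ 2 by ring]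
    have i8 : (Ω - 2 * ω)⁻¹ = -(2 * ω - Ω)⁻¹ := by rw [← inv_neg, neg_sub]
    simp only [div_eq_mul_inv, mul_inv, i3, i7, i8]
    ring
end
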